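/- arXiv:1408.2202 — 2 statements merged into one kernel-verified Lean document; each statement's English description precedes it below -/
import Mathlib

section
/- Let (M_n)_{n≥1} be a sequence of non-singular integer d×d matrices satisfying: for all nonzero j ∈ ℤ^d, all n ∈ ℕ, and all k ≥ log_q(‖j‖_∞), one has ‖M_{n+k}^T j‖_∞ ≥ q^k ‖M_n^T‖_∞ for some fixed q > 1. Then for any n, n' ∈ ℕ, any G ≥ 2, and any j ∈ ℤ^d with ‖j‖_∞ ≤ G, there exists at most one j' ∈ ℤ^d with ‖j'‖_∞ ≤ G such that ‖M_n^T j + M_{n'}^T j'‖_∞ < ‖M_{n''}^T‖_∞, where n'' ≤ min(n, n') − log_q(G); similarly at most one j' satisfies this with the minus sign. -/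
/-- The maximum norm `‖v‖_∞` of an integer vector, as a real number. -/
noncomputable def vecNorm {d : ℕ} (v : Fin d → ℤ) : ℝ :=
  ((Finset.univ.sup fun i => (v i).natAbs : ℕ) : ℝ)

/-- The `ℓ∞`-operator norm (maximum absolute row sum) of an integer matrix. -/
noncomputable def matNorm {d : ℕ} (M : Matrix (Fin d) (Fin d) ℤ) : ℝ :=
  ((Finset.univ.sup fun i => ∑ k, (M i k).natAbs : ℕ) : ℝ)

/-- The Hadamard gap condition: `‖M_{n+k}^T j‖_∞ ≥ q^k ‖M_n^T‖_∞` for all nonzero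
`j ∈ ℤ^d`, all `n`, and all `k ≥ log_q ‖j‖_∞`. -/
def HadamardGap {d : ℕ} (q : ℝ) (M : ℕ → Matrix (Fin d) (Fin d) ℤ) : Prop :=
  ∀ (j : Fin d → ℤ), j ≠ 0 → ∀ n k : ℕ, Real.logb q (vecNorm j) ≤ (k : ℝ) →
    q ^ k * matNorm (M n).transpose ≤ vecNorm ((M (n + k)).transpose.mulVec j)

lemma vecNorm_single_one {d : ℕ} (k : Fin d) :
    vecNorm (Pi.single k 1 : Fin d → ℤ) = 1 := by
  unfold vecNorm
  have h1 : (Finset.univ.sup fun i => ((Pi.single k 1 : Fin d → ℤ) i).natAbs) = 1 := by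
    apply le_antisymm
    · apply Finset.sup_le
      intro i _
      rcases eq_or_ne i k with h | h <;> simp [Pi.single_apply, h]
    · have := Finset.le_sup (f := fun i => ((Pi.single k 1 : Fin d → ℤ) i).natAbs)
        (Finset.mem_univ k)
      simpa using this
  rw [h1]; norm_num

lemma single_one_ne_zero {d : ℕ} (k : Fin d) : (Pi.single k 1 : Fin d → ℤ) ≠ 0 := by
  intro h
  have := congrFun h k
  simp at this

lemma vecNorm_sub_le {d : ℕ} (x y : Fin d → ℤ) :
    vecNorm (x - y) ≤ vecNorm x + vecNorm y := by
  unfold vecNorm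
  rw [← Nat.cast_add]
  have : (Finset.univ.sup fun i => ((x - y) i).natAbs) ≤
      (Finset.univ.sup fun i => (x i).natAbs) + (Finset.univ.sup fun i => (y i).natAbs) := by
    apply Finset.sup_le
    intro i _
    have h1 : ((x - y) i).natAbs = ((x i) - (y i)).natAbs := rfl
    rw [h1]
    exact le_trans (Int.natAbs_sub_le _ _)
      (add_le_add (Finset.le_sup (f := fun i => (x i).natAbs) (Finset.mem_univ i))
        (Finset.le_sup (f := fun i => (y i).natAbs) (Finset.mem_univ i)))
  exact_mod_cast this

lemma vecNorm_eps_smul {d : ℕ} {ε : ℤ} (hε : ε = 1 ∨ ε = -1) (w : Fin d → ℤ) :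
    vecNorm (ε • w) = vecNorm w := by
  unfold vecNorm
  have h : ∀ i, ((ε • w) i).natAbs = (w i).natAbs := by
    intro i
    have h1 : (ε • w) i = ε * w i := rfl
    rw [h1, Int.natAbs_mul]
    rcases hε with h | h <;> subst h <;> simp
  norm_cast
  exact Finset.sup_congr rfl fun i _ => h i

/-- Key structural lemma: if every column of `A` has an entry of absolute value at least
the maximum absolute row sum `R > 0`, then `‖A v‖_∞ ≥ R` for every nonzero integer `v`. -/
lemma key_struct {d : ℕ} (A : Matrix (Fin d) (Fin d) ℤ) (R : ℕ) (hR : 0 < R)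
    (hcol : ∀ k : Fin d, ∃ i, R ≤ (A i k).natAbs)
    (hrow : ∀ i, ∑ l, (A i l).natAbs ≤ R)
    (v : Fin d → ℤ) (hv : v ≠ 0) :
    ∃ i, R ≤ ((A.mulVec v) i).natAbs := by
  obtain ⟨k, hk⟩ := Function.ne_iff.mp hv
  obtain ⟨i, hik⟩ := hcol k
  refine ⟨i, ?_⟩
  have hsum : ∑ l, (A i l).natAbs ≤ R := hrow i
  have hsplit : ((A i k).natAbs + ∑ l ∈ Finset.univ.erase k, (A i l).natAbs)
      = ∑ l, (A i l).natAbs :=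
    Finset.add_sum_erase Finset.univ (fun l => (A i l).natAbs) (Finset.mem_univ k)
  have hzero : ∀ l, l ≠ k → (A i l).natAbs = 0 := by
    intro l hl
    have h0 : ∑ l ∈ Finset.univ.erase k, (A i l).natAbs = 0 := by omega
    exact (Finset.sum_eq_zero_iff.mp h0) l (Finset.mem_erase.mpr ⟨hl, Finset.mem_univ l⟩)
  have hmv : A.mulVec v i = A i k * v k := by
    show ∑ l, A i l * v l = A i k * v k
    apply Finset.sum_eq_single
    · intro b _ hb
      have : A i b = 0 := Int.natAbs_eq_zero.mp (hzero b hb)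
      simp [this]
    · intro h
      exact absurd (Finset.mem_univ k) h
  rw [hmv, Int.natAbs_mul]
  have hvk : 1 ≤ (v k).natAbs := Int.natAbs_pos.mpr (by simpa using hk)
  calc R = R * 1 := (mul_one R).symm
    _ ≤ (A i k).natAbs * (v k).natAbs := Nat.mul_le_mul hik hvk

theorem diophantine_unique_solution {d : ℕ} (q : ℝ) (hq : 1 < q)
    (M : ℕ → Matrix (Fin d) (Fin d) ℤ) (hdet : ∀ n, (M n).det ≠ 0)
    (hgap : HadamardGap q M)
    (n n' n'' : ℕ) (G : ℕ) (hG : 2 ≤ G)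
    (hn'' : (n'' : ℝ) ≤ min (n : ℝ) (n' : ℝ) - Real.logb q (G : ℝ))
    (j : Fin d → ℤ) (hj : vecNorm j ≤ (G : ℝ))
    (ε : ℤ) (hε : ε = 1 ∨ ε = -1) :
    ∀ j₁ j₂ : Fin d → ℤ, vecNorm j₁ ≤ (G : ℝ) → vecNorm j₂ ≤ (G : ℝ) →
      vecNorm ((M n).transpose.mulVec j + ε • (M n').transpose.mulVec j₁)
        < matNorm (M n'').transpose →
      vecNorm ((M n).transpose.mulVec j + ε • (M n').transpose.mulVec j₂)
        < matNorm (M n'').transpose →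
      j₁ = j₂ := by
  intro j₁ j₂ h₁G h₂G hb₁ hb₂
  rcases Nat.eq_zero_or_pos d with hd0 | hd
  · subst hd0
    exact funext fun i => i.elim0
  by_contra hne
  have hnonempty : Nonempty (Fin d) := ⟨⟨0, hd⟩⟩
  -- notation
  set R' : ℕ := Finset.univ.sup (fun i => ∑ l, ((M n').transpose i l).natAbs) with hR'
  have hmatA : matNorm (M n').transpose = (R' : ℝ) := rfl
  -- R' is positive since M n' is nonsingular
  have hR'pos : 0 < R' := by
    by_contra h0
    have hR0 : R' = 0 := by omega
    have hAzero : (M n').transpose = 0 := by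
      ext i l
      have h1 : ∑ l, ((M n').transpose i l).natAbs ≤ R' :=
        Finset.le_sup (f := fun i => ∑ l, ((M n').transpose i l).natAbs) (Finset.mem_univ i)
      rw [hR0] at h1
      have h2 : ∑ l, ((M n').transpose i l).natAbs = 0 := Nat.le_zero.mp h1
      have h3 := (Finset.sum_eq_zero_iff.mp h2) l (Finset.mem_univ l)
      simpa using Int.natAbs_eq_zero.mp h3
    have hdet0 : (M n').det = 0 := by
      have hAdet : ((M n').transpose).det = 0 := by
        rw [hAzero]
        exact Matrix.det_zero
      rwa [Matrix.det_transpose] at hAdet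
    exact hdet n' hdet0
  -- Every column of (M n')ᵀ has an entry of absolute value ≥ R'
  have hcol : ∀ k : Fin d, ∃ i, R' ≤ ((M n').transpose i k).natAbs := by
    intro k
    have hlog : Real.logb q (vecNorm (Pi.single k 1 : Fin d → ℤ)) ≤ ((0 : ℕ) : ℝ) := by
      rw [vecNorm_single_one, Real.logb_one]; norm_num
    have h := hgap (Pi.single k 1 : Fin d → ℤ) (single_one_ne_zero k) n' 0 hlog
    rw [pow_zero, one_mul, Nat.add_zero] at h
    rw [Matrix.mulVec_single_one] at h
    unfold vecNorm matNorm at h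
    have hnat : R' ≤ Finset.univ.sup
        fun i => ((((M n').transpose).transpose k) i).natAbs := by
      exact_mod_cast h
    obtain ⟨i, _, hi⟩ := (Finset.le_sup_iff hR'pos).mp hnat
    exact ⟨i, hi⟩
  have hrow : ∀ i, ∑ l, ((M n').transpose i l).natAbs ≤ R' := fun i =>
    Finset.le_sup (f := fun i => ∑ l, ((M n').transpose i l).natAbs) (Finset.mem_univ i)
  -- structural lower bound for v = j₁ - j₂
  have hv : j₁ - j₂ ≠ 0 := sub_ne_zero.mpr hne
  obtain ⟨i, hi⟩ := key_struct ((M n').transpose) R' hR'pos hcol hrow (j₁ - j₂) hv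
  have hlow : (R' : ℝ) ≤ vecNorm ((M n').transpose.mulVec (j₁ - j₂)) := by
    unfold vecNorm
    exact_mod_cast le_trans hi
      (Finset.le_sup (f := fun i => (((M n').transpose.mulVec (j₁ - j₂)) i).natAbs)
        (Finset.mem_univ i))
  -- n'' < n'
  have hlogG : 0 < Real.logb q (G : ℝ) := by
    apply Real.logb_pos hq
    exact_mod_cast (by omega : 1 < G)
  have hminn' : min (n : ℝ) (n' : ℝ) ≤ (n' : ℝ) := min_le_right _ _
  have hn''n' : n'' < n' := by
    have : (n'' : ℝ) < (n' : ℝ) := by linarith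
    exact_mod_cast this
  have hkcast : ((n' - n'' : ℕ) : ℝ) = (n' : ℝ) - (n'' : ℝ) := by
    rw [Nat.cast_sub (le_of_lt hn''n')]
  -- G ≤ q ^ (n' - n'')
  have hGq : (G : ℝ) ≤ q ^ (n' - n'' : ℕ) := by
    have h1 : Real.logb q (G : ℝ) ≤ ((n' - n'' : ℕ) : ℝ) := by
      rw [hkcast]; linarith
    have hq0 : 0 < q := by linarith
    have hG0 : (0 : ℝ) < (G : ℝ) := by positivity
    calc (G : ℝ) = q ^ (Real.logb q (G : ℝ)) := (Real.rpow_logb hq0 (by linarith) hG0).symm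
      _ ≤ q ^ (((n' - n'' : ℕ) : ℝ)) := Real.rpow_le_rpow_of_exponent_le (le_of_lt hq) h1
      _ = q ^ (n' - n'' : ℕ) := Real.rpow_natCast q _
  -- gap at base n'' applied to a unit vector
  have hlog0 : Real.logb q (vecNorm (Pi.single (⟨0, hd⟩ : Fin d) 1 : Fin d → ℤ))
      ≤ ((n' - n'' : ℕ) : ℝ) := by
    rw [vecNorm_single_one, Real.logb_one]
    positivity
  have hgap0 := hgap (Pi.single (⟨0, hd⟩ : Fin d) 1 : Fin d → ℤ)
    (single_one_ne_zero _) n'' (n' - n'') hlog0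
  rw [Nat.add_sub_cancel' (le_of_lt hn''n')] at hgap0
  -- ‖column of (M n')ᵀ‖ ≤ R'
  have hcolle : vecNorm ((M n').transpose.mulVec (Pi.single (⟨0, hd⟩ : Fin d) 1 : Fin d → ℤ))
      ≤ (R' : ℝ) := by
    rw [Matrix.mulVec_single_one]
    unfold vecNorm
    have hle : (Finset.univ.sup fun i => ((((M n').transpose).transpose ⟨0, hd⟩) i).natAbs)
        ≤ R' := by
      apply Finset.sup_le
      intro i _
      exact le_trans (Finset.single_le_sum (f := fun l => (((M n').transpose) i l).natAbs)
        (fun _ _ => Nat.zero_le _) (Finset.mem_univ (⟨0, hd⟩ : Fin d))) (hrow i)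
    exact_mod_cast hle
  have hmRnn : 0 ≤ matNorm (M n'').transpose := by
    unfold matNorm; positivity
  -- chain of lower bounds
  have hchain : 2 * matNorm (M n'').transpose ≤ vecNorm ((M n').transpose.mulVec (j₁ - j₂)) := by
    have h2G : (2 : ℝ) ≤ (G : ℝ) := by exact_mod_cast hG
    have c1 : 2 * matNorm (M n'').transpose ≤ (G : ℝ) * matNorm (M n'').transpose :=
      mul_le_mul_of_nonneg_right h2G hmRnn
    have c2 : (G : ℝ) * matNorm (M n'').transpose
        ≤ q ^ (n' - n'' : ℕ) * matNorm (M n'').transpose :=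
      mul_le_mul_of_nonneg_right hGq hmRnn
    have c3 : q ^ (n' - n'' : ℕ) * matNorm (M n'').transpose ≤ (R' : ℝ) :=
      le_trans hgap0 hcolle
    linarith
  -- upper bound from the two hypotheses
  have hdiff : ((M n).transpose.mulVec j + ε • (M n').transpose.mulVec j₁)
      - ((M n).transpose.mulVec j + ε • (M n').transpose.mulVec j₂)
      = ε • ((M n').transpose.mulVec (j₁ - j₂)) := by
    rw [Matrix.mulVec_sub, smul_sub]
    abel
  have hupper : vecNorm ((M n').transpose.mulVec (j₁ - j₂)) < 2 * matNorm (M n'').transpose := by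
    have h1 := vecNorm_sub_le
      ((M n).transpose.mulVec j + ε • (M n').transpose.mulVec j₁)
      ((M n).transpose.mulVec j + ε • (M n').transpose.mulVec j₂)
    rw [hdiff, vecNorm_eps_smul hε] at h1
    linarith
  linarith
end

section
/- Let q > 1 and P be a positive integer with P > log_q(G) + log_q(3G) and P > log_q(√3), and let (‖M_n^T‖_∞) be a sequence of positive reals with ‖M_{n+k}^T‖_∞ ≥ q^k ‖M_n^T‖_∞. Suppose for 0 ≤ k ≤ m, j_{2k} ∈ ℤ^d are vectors with either j_{2k} = 0 or ‖j_{2k}‖_∞ ≤ 2G·‖M_{P(2k+1)}^T‖_∞ for k < m, and ‖j_{2m}‖_∞ ≥ 3G·‖M_{P(2m−1)}^T‖_∞ with j_{2m} ≠ 0. Then Σ_{k=0}^{m} j_{2k} ≠ 0. -/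
lemma vecNorm_zero {d : ℕ} : vecNorm (0 : Fin d → ℤ) = 0 := by
  simp [vecNorm]

lemma vecNorm_neg {d : ℕ} (v : Fin d → ℤ) : vecNorm (-v) = vecNorm v := by
  simp [vecNorm]

lemma vecNorm_add_le {d : ℕ} (u v : Fin d → ℤ) :
    vecNorm (u + v) ≤ vecNorm u + vecNorm v := by
  unfold vecNorm
  rw [← Nat.cast_add, Nat.cast_le]
  refine Finset.sup_le fun i _ => ?_
  exact (Int.natAbs_add_le _ _).trans
    (add_le_add (Finset.le_sup (f := fun i => (u i).natAbs) (Finset.mem_univ i))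
      (Finset.le_sup (f := fun i => (v i).natAbs) (Finset.mem_univ i)))

lemma vecNorm_sum_le {d : ℕ} (s : Finset ℕ) (f : ℕ → Fin d → ℤ) :
    vecNorm (∑ k ∈ s, f k) ≤ ∑ k ∈ s, vecNorm (f k) := by
  induction s using Finset.cons_induction with
  | empty => simp [vecNorm_zero]
  | cons a s ha ih =>
    rw [Finset.sum_cons, Finset.sum_cons]
    exact (vecNorm_add_le _ _).trans (add_le_add le_rfl ih)

theorem frequency_separation {d : ℕ} (q : ℝ) (hq : 1 < q)
    (G P m : ℕ) (hG : 2 ≤ G) (hP0 : 0 < P)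
    (hP1 : Real.logb q (G : ℝ) + Real.logb q (3 * (G : ℝ)) < (P : ℝ))
    (hP2 : Real.logb q (Real.sqrt 3) < (P : ℝ))
    (Mn : ℕ → ℝ) (hMpos : ∀ n, 0 < Mn n)
    (hgrow : ∀ n k : ℕ, q ^ k * Mn n ≤ Mn (n + k))
    (j : ℕ → Fin d → ℤ)
    (hsmall : ∀ k < m, j k = 0 ∨ vecNorm (j k) ≤ 2 * (G : ℝ) * Mn (P * (2 * k + 1)))
    (hbig : 3 * (G : ℝ) * Mn (P * (2 * m - 1)) ≤ vecNorm (j m))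
    (hjm : j m ≠ 0) :
    ∑ k ∈ Finset.range (m + 1), j k ≠ 0 := by
  rcases Nat.eq_zero_or_pos m with hm | hm
  · subst hm; simpa using hjm
  intro hsum
  have hq0 : (0 : ℝ) < q := lt_trans one_pos hq
  -- q^(2P) > 3
  have h3 : (3 : ℝ) < q ^ (2 * P) := by
    have hs : Real.sqrt 3 < q ^ (P : ℝ) :=
      (Real.logb_lt_iff_lt_rpow hq (Real.sqrt_pos.2 (by norm_num))).mp hP2
    have hs' : Real.sqrt 3 < q ^ P := by rwa [Real.rpow_natCast] at hs
    have : Real.sqrt 3 * Real.sqrt 3 < q ^ P * q ^ P :=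
      mul_lt_mul' hs'.le hs' (Real.sqrt_nonneg 3) (lt_trans (Real.sqrt_pos.2 (by norm_num)) hs')
    rw [Real.mul_self_sqrt (by norm_num)] at this
    calc (3 : ℝ) < q ^ P * q ^ P := this
      _ = q ^ (2 * P) := by rw [two_mul, pow_add]
  set t : ℝ := (q ^ (2 * P))⁻¹ with ht
  have ht0 : 0 ≤ t := inv_nonneg.2 (by positivity)
  have ht13 : t < 1 / 3 := by
    rw [ht, inv_lt_comm₀ (by positivity) (by norm_num)]
    simpa using h3
  have ht1 : t < 1 := ht13.trans (by norm_num)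
  set M := Mn (P * (2 * m - 1)) with hM
  have hMpos' : 0 < M := hMpos _
  -- each small term is bounded
  have hbound : ∀ k < m, vecNorm (j k) ≤ 2 * (G : ℝ) * M * t ^ (m - 1 - k) := by
    intro k hk
    have hdecay : Mn (P * (2 * k + 1)) ≤ M * t ^ (m - 1 - k) := by
      have harith : P * (2 * k + 1) + 2 * P * (m - 1 - k) = P * (2 * m - 1) := by
        have h1 : m - 1 - k = m - 1 - k := rfl
        have h2 : 2 * m - 1 = 2 * k + 1 + 2 * (m - 1 - k) := by omega
        rw [h2]; ring
      have key : q ^ (2 * P * (m - 1 - k)) * Mn (P * (2 * k + 1)) ≤ M := by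
        rw [hM, ← harith]; exact hgrow _ _
      have hqp : (0 : ℝ) < q ^ (2 * P * (m - 1 - k)) := by positivity
      have htpow : t ^ (m - 1 - k) = (q ^ (2 * P * (m - 1 - k)))⁻¹ := by
        rw [ht, inv_pow, ← pow_mul]
      rw [htpow, ← div_eq_mul_inv, le_div_iff₀ hqp, mul_comm]
      exact key
    have h2GM : (0:ℝ) ≤ 2 * (G:ℝ) := by positivity
    rcases hsmall k hk with h0 | hle
    · rw [h0, vecNorm_zero]; positivity
    · calc vecNorm (j k) ≤ 2 * (G : ℝ) * Mn (P * (2 * k + 1)) := hle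
        _ ≤ 2 * (G : ℝ) * (M * t ^ (m - 1 - k)) := by
            exact mul_le_mul_of_nonneg_left hdecay h2GM
        _ = 2 * (G : ℝ) * M * t ^ (m - 1 - k) := by ring
  -- j m = - sum of the rest
  have hjm_eq : j m = -∑ k ∈ Finset.range m, j k := by
    have := hsum
    rw [Finset.sum_range_succ] at this
    linear_combination (norm := abel) this
  have hnorm : vecNorm (j m) ≤ ∑ k ∈ Finset.range m, vecNorm (j k) := by
    rw [hjm_eq, vecNorm_neg]
    exact vecNorm_sum_le _ _
  -- geometric sum bound
  have hgeom : ∑ k ∈ Finset.range m, t ^ (m - 1 - k) ≤ (1 - t)⁻¹ := by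
    rw [Finset.sum_range_reflect (fun i => t ^ i) m, geom_sum_eq (ne_of_lt ht1),
      div_le_iff_of_neg (by linarith : t - 1 < 0)]
    have h1t : (0:ℝ) < 1 - t := by linarith
    have : (1 - t)⁻¹ * (t - 1) = -1 := by field_simp; ring
    nlinarith [pow_nonneg ht0 m]
  have hGpos : (2:ℝ) ≤ (G : ℝ) := by exact_mod_cast hG
  have hsum_le : ∑ k ∈ Finset.range m, vecNorm (j k) ≤ 2 * (G:ℝ) * M * (1 - t)⁻¹ := by
    calc ∑ k ∈ Finset.range m, vecNorm (j k)
        ≤ ∑ k ∈ Finset.range m, 2 * (G:ℝ) * M * t ^ (m - 1 - k) :=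
          Finset.sum_le_sum fun k hk => hbound k (Finset.mem_range.mp hk)
      _ = 2 * (G:ℝ) * M * ∑ k ∈ Finset.range m, t ^ (m - 1 - k) := by
          rw [Finset.mul_sum]
      _ ≤ 2 * (G:ℝ) * M * (1 - t)⁻¹ := by
          apply mul_le_mul_of_nonneg_left hgeom
          positivity
  have hinv : (1 - t)⁻¹ < 3 / 2 := by
    have h1 : (2:ℝ)/3 < 1 - t := by linarith
    have := (inv_lt_inv₀ (by linarith) (by norm_num : (0:ℝ) < 2/3)).mpr h1
    calc (1 - t)⁻¹ < ((2:ℝ)/3)⁻¹ := this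
      _ = 3 / 2 := by norm_num
  have hGM : (0:ℝ) < (G:ℝ) * M := by positivity
  nlinarith [hbig.trans (hnorm.trans hsum_le)]
end
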